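/- Let X be an ordered real Banach space whose positive cone is closed, generating, and normal, and suppose the norm of X is σ-order continuous. Let Y be a real normed space. Then a linear operator T : X → Y is σ-Lebesgue if and only if it is σ-order-to-norm continuous, and T is σ-w-Lebesgue if and only if it is σ-order-to-weak continuous. -/

import Mathlib

open Filter Set Topology Bornology

universe u

/-- `x_α ↓ 0`: the net `x` is decreasing with infimum `0`. -/
def DecreasesToZero {X : Type*} [Zero X] [PartialOrder X] {ι : Type*} [Preorder ι]
    (x : ι → X) : Prop :=
  Antitone x ∧ IsGLB (Set.range x) 0

/-- `x_α →o 0`: order convergence of the net `x` to `0`, i.e. there is a net `g_β`,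
indexed by a (nonempty) directed set, decreasing with infimum `0`, such that for each `β`
there is `α_β` with `±x_α ≤ g_β` for all `α ≥ α_β`. -/
def OrderConvZero {X : Type u} [Zero X] [Neg X] [PartialOrder X] {ι : Type*} [Preorder ι]
    (x : ι → X) : Prop :=
  ∃ (β : Type u) (pβ : Preorder β), Nonempty β ∧
    IsDirected β (fun b₁ b₂ => pβ.le b₁ b₂) ∧
    ∃ g : β → X, (∀ b₁ b₂ : β, pβ.le b₁ b₂ → g b₂ ≤ g b₁) ∧ IsGLB (Set.range g) 0 ∧
      ∀ b : β, ∃ a₀ : ι, ∀ a : ι, a₀ ≤ a → -g b ≤ x a ∧ x a ≤ g b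

/-- `x_α →r 0`: relative uniform convergence of the net `x` to `0`: for some `u ≥ 0`
there is an increasing sequence `(α_n)` of indices with `±x_α ≤ (1/n)u` for all `α ≥ α_n`. -/
def RuConvZero {X : Type*} [Zero X] [Neg X] [PartialOrder X] [SMul ℝ X] {ι : Type*} [Preorder ι]
    (x : ι → X) : Prop :=
  ∃ u : X, 0 ≤ u ∧ ∃ α : ℕ → ι, Monotone α ∧
    ∀ n : ℕ, 0 < n → ∀ a : ι, α n ≤ a → -((n : ℝ)⁻¹ • u) ≤ x a ∧ x a ≤ (n : ℝ)⁻¹ • u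

/-- The positive cone of an ordered TVS is normal: the topology has a base of neighborhoods
of `0` consisting of full sets. -/
def NormalConeTVS (Y : Type*) [Zero Y] [PartialOrder Y] [TopologicalSpace Y] : Prop :=
  ∀ U ∈ nhds (0 : Y), ∃ V ∈ nhds (0 : Y), V ⊆ U ∧
    ∀ a b x : Y, a ∈ V → b ∈ V → a ≤ x → x ≤ b → x ∈ V

open Pointwise
/-- A decreasing-to-zero sequence order converges to zero. -/
lemma decreasesToZero_orderConvZero {X : Type u} [AddCommGroup X] [PartialOrder X]
    [CovariantClass X X (· + ·) (· ≤ ·)] {x : ℕ → X} (h : DecreasesToZero x) :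
    OrderConvZero x := by
  obtain ⟨hanti, hglb⟩ := h
  have hx0 : ∀ n, 0 ≤ x n := fun n => hglb.1 ⟨n, rfl⟩
  refine ⟨ULift ℕ, inferInstance, ⟨⟨0⟩⟩,
    ⟨fun a b => ⟨⟨max a.down b.down⟩, le_max_left a.down b.down, le_max_right a.down b.down⟩⟩,
    fun b => x b.down, fun b₁ b₂ h12 => hanti h12, ?_,
    fun b => ⟨b.down, fun a ha => ⟨?_, hanti ha⟩⟩⟩
  · have hr : Set.range (fun b : ULift ℕ => x b.down) = Set.range x := by
      ext z
      constructor
      · rintro ⟨b, rfl⟩; exact ⟨b.down, rfl⟩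
      · rintro ⟨n, rfl⟩; exact ⟨⟨n⟩, rfl⟩
    rw [hr]; exact hglb
  · exact le_trans (neg_nonpos.mpr (hx0 b.down)) (hx0 a)

section Aux

variable {X : Type*} [NormedAddCommGroup X] [NormedSpace ℝ X] [CompleteSpace X]
    [PartialOrder X] [CovariantClass X X (· + ·) (· ≤ ·)] [PosSMulMono ℝ X]

lemma aux_tsum_nonneg (hclosed : IsClosed {x : X | 0 ≤ x}) {f : ℕ → X} (hf : ∀ n, 0 ≤ f n) :
    0 ≤ ∑' n, f n := by
  by_cases hs : Summable f
  · have ht := hs.hasSum.tendsto_sum_nat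
    have hmem : ∀ n, ∑ i ∈ Finset.range n, f i ∈ {x : X | 0 ≤ x} := by
      intro n
      induction n with
      | zero => simp
      | succ n ih =>
        rw [Finset.sum_range_succ]
        exact add_nonneg ih (hf n)
    exact hclosed.mem_of_tendsto ht (Eventually.of_forall hmem)
  · rw [tsum_eq_zero_of_not_summable hs]

/-- Andô's theorem: a closed generating cone in a Banach space gives a bounded
decomposition. -/
lemma ando_decomposition (hclosed : IsClosed {x : X | 0 ≤ x})
    (hgen : ∀ x : X, ∃ a b : X, 0 ≤ a ∧ 0 ≤ b ∧ x = a - b) :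
    ∃ M : ℝ, 0 < M ∧ ∀ x : X, ∃ a b : X, 0 ≤ a ∧ 0 ≤ b ∧ x = a - b ∧
      ‖a‖ ≤ M * ‖x‖ ∧ ‖b‖ ≤ M * ‖x‖ := by
  classical
  set C : Set X := {x | ∃ a b : X, 0 ≤ a ∧ 0 ≤ b ∧ ‖a‖ ≤ 1 ∧ ‖b‖ ≤ 1 ∧ x = a - b} with hC
  have hconv : Convex ℝ C := by
    rintro x ⟨a, b, ha, hb, hna, hnb, rfl⟩ y ⟨a', b', ha', hb', hna', hnb', rfl⟩ s t hs ht hst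
    refine ⟨s • a + t • a', s • b + t • b',
      add_nonneg (smul_nonneg hs ha) (smul_nonneg ht ha'),
      add_nonneg (smul_nonneg hs hb) (smul_nonneg ht hb'), ?_, ?_, by module⟩
    · calc ‖s • a + t • a'‖ ≤ ‖s • a‖ + ‖t • a'‖ := norm_add_le _ _
        _ = s * ‖a‖ + t * ‖a'‖ := by
            rw [norm_smul, norm_smul, Real.norm_of_nonneg hs, Real.norm_of_nonneg ht]
        _ ≤ s * 1 + t * 1 := by gcongr
        _ = 1 := by linarith
    · calc ‖s • b + t • b'‖ ≤ ‖s • b‖ + ‖t • b'‖ := norm_add_le _ _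
        _ = s * ‖b‖ + t * ‖b'‖ := by
            rw [norm_smul, norm_smul, Real.norm_of_nonneg hs, Real.norm_of_nonneg ht]
        _ ≤ s * 1 + t * 1 := by gcongr
        _ = 1 := by linarith
  -- X is the union of the closures of the dilates of C
  have hU : (⋃ n : ℕ, closure (((n : ℝ) + 1) • C)) = univ := by
    ext x
    simp only [mem_iUnion, mem_univ, iff_true]
    obtain ⟨a, b, ha, hb, rfl⟩ := hgen x
    set n : ℕ := ⌈max ‖a‖ ‖b‖⌉₊ with hn
    set s : ℝ := (n : ℝ) + 1 with hsdef
    have hs : (0 : ℝ) < s := by positivity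
    have hna : ‖a‖ ≤ s := by
      calc ‖a‖ ≤ max ‖a‖ ‖b‖ := le_max_left _ _
        _ ≤ (n : ℝ) := Nat.le_ceil _
        _ ≤ s := by simp [hsdef]
    have hnb : ‖b‖ ≤ s := by
      calc ‖b‖ ≤ max ‖a‖ ‖b‖ := le_max_right _ _
        _ ≤ (n : ℝ) := Nat.le_ceil _
        _ ≤ s := by simp [hsdef]
    refine ⟨n, subset_closure ?_⟩
    refine ⟨s⁻¹ • (a - b), ⟨s⁻¹ • a, s⁻¹ • b,
      smul_nonneg (inv_nonneg.mpr hs.le) ha, smul_nonneg (inv_nonneg.mpr hs.le) hb, ?_, ?_,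
      by rw [smul_sub]⟩, smul_inv_smul₀ hs.ne' _⟩
    · rw [norm_smul, Real.norm_of_nonneg (inv_nonneg.mpr hs.le)]
      rw [inv_mul_le_iff₀ hs, mul_one]; exact hna
    · rw [norm_smul, Real.norm_of_nonneg (inv_nonneg.mpr hs.le)]
      rw [inv_mul_le_iff₀ hs, mul_one]; exact hnb
  -- Baire category
  obtain ⟨n, hne⟩ := nonempty_interior_of_iUnion_of_closed (fun n : ℕ => isClosed_closure) hU
  have hsne : ((n : ℝ) + 1) ≠ 0 := by positivity
  rw [closure_smul₀' hsne, interior_smul₀ hsne] at hne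
  obtain ⟨y, hy⟩ := Set.smul_set_nonempty.mp hne
  -- symmetry of C
  have hsymm : ∀ z ∈ C, -z ∈ C := by
    rintro z ⟨a, b, ha, hb, hna, hnb, rfl⟩
    exact ⟨b, a, hb, ha, hnb, hna, by abel⟩
  have hyc : -y ∈ closure C := by
    have h1 : y ∈ closure C := interior_subset hy
    have h2 : Continuous fun z : X => -z := continuous_neg
    have := image_closure_subset_closure_image (f := fun z : X => -z) h2
      (s := C) ⟨y, h1, rfl⟩
    exact closure_mono (by rintro w ⟨z, hz, rfl⟩; exact hsymm z hz) this
  -- 0 is interior to closure C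
  have h0 : (0 : X) ∈ interior (closure C) := by
    have := (hconv.closure).combo_interior_closure_mem_interior (x := y) (y := -y)
      (a := (1:ℝ)/2) (b := (1:ℝ)/2) hy (by rwa [closure_closure]) (by norm_num) (by norm_num)
      (by norm_num)
    simpa [smul_neg] using this
  obtain ⟨r, hr, hball⟩ : ∃ r > 0, Metric.ball (0 : X) r ⊆ closure C :=
    Metric.mem_nhds_iff.mp (mem_interior_iff_mem_nhds.mp h0)
  -- approximation step
  have approx : ∀ x : X, ∃ a b : X, 0 ≤ a ∧ 0 ≤ b ∧ ‖a‖ ≤ 2 / r * ‖x‖ ∧ ‖b‖ ≤ 2 / r * ‖x‖ ∧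
      ‖x - (a - b)‖ ≤ ‖x‖ / 2 := by
    intro x
    rcases eq_or_ne x 0 with rfl | hx
    · exact ⟨0, 0, le_refl _, le_refl _, by simp, by simp, by simp⟩
    have hnx : 0 < ‖x‖ := norm_pos_iff.mpr hx
    set s : ℝ := 2 * ‖x‖ / r with hs
    have hspos : 0 < s := by positivity
    have hmem : s⁻¹ • x ∈ Metric.ball (0 : X) r := by
      rw [mem_ball_zero_iff, norm_smul, Real.norm_of_nonneg (inv_nonneg.mpr hspos.le)]
      rw [hs]
      rw [show (2 * ‖x‖ / r)⁻¹ * ‖x‖ = r / 2 by field_simp]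
      linarith
    have hcl := hball hmem
    rw [Metric.mem_closure_iff] at hcl
    obtain ⟨c, hcC, hdist⟩ := hcl (r / 4) (by positivity)
    obtain ⟨a₀, b₀, ha₀, hb₀, hna₀, hnb₀, rfl⟩ := hcC
    refine ⟨s • a₀, s • b₀, smul_nonneg hspos.le ha₀, smul_nonneg hspos.le hb₀, ?_, ?_, ?_⟩
    · rw [norm_smul, Real.norm_of_nonneg hspos.le]
      calc s * ‖a₀‖ ≤ s * 1 := by gcongr
        _ = 2 / r * ‖x‖ := by rw [hs]; ring
    · rw [norm_smul, Real.norm_of_nonneg hspos.le]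
      calc s * ‖b₀‖ ≤ s * 1 := by gcongr
        _ = 2 / r * ‖x‖ := by rw [hs]; ring
    · have hrw : x - (s • a₀ - s • b₀) = s • (s⁻¹ • x - (a₀ - b₀)) := by
        rw [smul_sub, smul_inv_smul₀ hspos.ne', smul_sub]
      rw [hrw, norm_smul, Real.norm_of_nonneg hspos.le]
      have hd : ‖s⁻¹ • x - (a₀ - b₀)‖ = dist (s⁻¹ • x) (a₀ - b₀) := (dist_eq_norm _ _).symm
      calc s * ‖s⁻¹ • x - (a₀ - b₀)‖ ≤ s * (r / 4) := by
            rw [hd]; exact mul_le_mul_of_nonneg_left hdist.le hspos.le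
        _ = ‖x‖ / 2 := by rw [hs]; field_simp; ring
  -- iterate
  choose A B hA0 hB0 hAn hBn hap using approx
  refine ⟨4 / r + 1, by positivity, fun x => ?_⟩
  set y : ℕ → X := fun n => (fun z => z - (A z - B z))^[n] x with hy
  have hy0 : y 0 = x := rfl
  have hysucc : ∀ n, y (n + 1) = y n - (A (y n) - B (y n)) := fun n =>
    Function.iterate_succ_apply' (fun z => z - (A z - B z)) n x
  have hybound : ∀ n, ‖y n‖ ≤ (1 / 2) ^ n * ‖x‖ := by
    intro n
    induction n with
    | zero => simp [hy0]
    | succ n ih =>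
      rw [hysucc]
      calc ‖y n - (A (y n) - B (y n))‖ ≤ ‖y n‖ / 2 := hap _
        _ ≤ ((1 / 2) ^ n * ‖x‖) / 2 := by linarith
        _ = (1 / 2) ^ (n + 1) * ‖x‖ := by ring
  have hAb : ∀ n, ‖A (y n)‖ ≤ (2 / r * ‖x‖) * (1 / 2) ^ n := fun n => by
    calc ‖A (y n)‖ ≤ 2 / r * ‖y n‖ := hAn _
      _ ≤ 2 / r * ((1 / 2) ^ n * ‖x‖) := by
          have := hybound n
          have h2r : (0:ℝ) ≤ 2 / r := by positivity
          exact mul_le_mul_of_nonneg_left this h2r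
      _ = (2 / r * ‖x‖) * (1 / 2) ^ n := by ring
  have hBb : ∀ n, ‖B (y n)‖ ≤ (2 / r * ‖x‖) * (1 / 2) ^ n := fun n => by
    calc ‖B (y n)‖ ≤ 2 / r * ‖y n‖ := hBn _
      _ ≤ 2 / r * ((1 / 2) ^ n * ‖x‖) := by
          have := hybound n
          have h2r : (0:ℝ) ≤ 2 / r := by positivity
          exact mul_le_mul_of_nonneg_left this h2r
      _ = (2 / r * ‖x‖) * (1 / 2) ^ n := by ring
  have hgeo : Summable fun n : ℕ => (2 / r * ‖x‖) * (1 / 2) ^ n :=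
    (summable_geometric_of_lt_one (by norm_num) (by norm_num)).mul_left _
  have hsA : Summable fun n => A (y n) := Summable.of_norm_bounded hgeo hAb
  have hsB : Summable fun n => B (y n) := Summable.of_norm_bounded hgeo hBb
  set a := ∑' n, A (y n) with ha
  set b := ∑' n, B (y n) with hb
  have ha0 : 0 ≤ a := aux_tsum_nonneg hclosed fun n => hA0 _
  have hb0 : 0 ≤ b := aux_tsum_nonneg hclosed fun n => hB0 _
  have hyt : Tendsto y atTop (𝓝 0) := by
    apply squeeze_zero_norm hybound
    have := (tendsto_pow_atTop_nhds_zero_of_lt_one (by norm_num : (0:ℝ) ≤ 1/2)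
      (by norm_num : (1:ℝ)/2 < 1)).mul_const ‖x‖
    simpa using this
  have hxab : x = a - b := by
    have hps : ∀ n, ∑ k ∈ Finset.range n, (A (y k) - B (y k)) = x - y n := by
      intro n
      induction n with
      | zero => simp [hy0]
      | succ n ih =>
        rw [Finset.sum_range_succ, ih, hysucc]
        abel
    have h1 : Tendsto (fun n => ∑ k ∈ Finset.range n, (A (y k) - B (y k))) atTop (𝓝 (a - b)) := by
      have := (hsA.sub hsB).hasSum.tendsto_sum_nat
      rwa [Summable.tsum_sub hsA hsB] at this
    have h2 : Tendsto (fun n => x - y n) atTop (𝓝 (x - 0)) := tendsto_const_nhds.sub hyt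
    rw [sub_zero] at h2
    have h1' : Tendsto (fun n => x - y n) atTop (𝓝 (a - b)) := by
      rw [show (fun n => x - y n) = fun n => ∑ k ∈ Finset.range n, (A (y k) - B (y k)) from
        funext fun n => (hps n).symm]
      exact h1
    exact (tendsto_nhds_unique h2 h1')
  have hna : ‖a‖ ≤ (4 / r + 1) * ‖x‖ := by
    have hsnA : Summable fun n => ‖A (y n)‖ :=
      Summable.of_nonneg_of_le (fun n => norm_nonneg _) hAb hgeo
    calc ‖a‖ ≤ ∑' n, ‖A (y n)‖ := norm_tsum_le_tsum_norm hsnA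
      _ ≤ ∑' n : ℕ, (2 / r * ‖x‖) * (1 / 2) ^ n := Summable.tsum_le_tsum hAb hsnA hgeo
      _ = (2 / r * ‖x‖) * ∑' n : ℕ, (1 / 2 : ℝ) ^ n := tsum_mul_left
      _ = (2 / r * ‖x‖) * 2 := by
          rw [tsum_geometric_of_lt_one (by norm_num) (by norm_num)]; norm_num
      _ ≤ (4 / r + 1) * ‖x‖ := by
          have hx0 : (0:ℝ) ≤ ‖x‖ := norm_nonneg _
          have heq : (4 / r + 1) * ‖x‖ = 2 / r * ‖x‖ * 2 + ‖x‖ := by ring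
          linarith
  have hnb : ‖b‖ ≤ (4 / r + 1) * ‖x‖ := by
    have hsnB : Summable fun n => ‖B (y n)‖ :=
      Summable.of_nonneg_of_le (fun n => norm_nonneg _) hBb hgeo
    calc ‖b‖ ≤ ∑' n, ‖B (y n)‖ := norm_tsum_le_tsum_norm hsnB
      _ ≤ ∑' n : ℕ, (2 / r * ‖x‖) * (1 / 2) ^ n := Summable.tsum_le_tsum hBb hsnB hgeo
      _ = (2 / r * ‖x‖) * ∑' n : ℕ, (1 / 2 : ℝ) ^ n := tsum_mul_left
      _ = (2 / r * ‖x‖) * 2 := by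
          rw [tsum_geometric_of_lt_one (by norm_num) (by norm_num)]; norm_num
      _ ≤ (4 / r + 1) * ‖x‖ := by
          have hx0 : (0:ℝ) ≤ ‖x‖ := norm_nonneg _
          have heq : (4 / r + 1) * ‖x‖ = 2 / r * ‖x‖ * 2 + ‖x‖ := by ring
          linarith
  exact ⟨a, b, ha0, hb0, hxab, hna, hnb⟩

/-- Key lemma: a σ-Lebesgue operator sends norm-null sequences to norm-null sequences. -/
lemma key_lemma {Z : Type*} [NormedAddCommGroup Z] [NormedSpace ℝ Z]
    (hclosed : IsClosed {x : X | 0 ≤ x})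
    (hgen : ∀ x : X, ∃ a b : X, 0 ≤ a ∧ 0 ≤ b ∧ x = a - b)
    (S : X →ₗ[ℝ] Z)
    (hS : ∀ y : ℕ → X, DecreasesToZero y → Tendsto (fun n => ‖S (y n)‖) atTop (𝓝 0))
    {x : ℕ → X} (hx : Tendsto (fun n => ‖x n‖) atTop (𝓝 0)) :
    Tendsto (fun n => ‖S (x n)‖) atTop (𝓝 0) := by
  obtain ⟨M, hM, hdec⟩ := ando_decomposition hclosed hgen
  by_contra hcon
  have hfr : ∃ ε > 0, ∃ᶠ n in atTop, ε ≤ ‖S (x n)‖ := by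
    by_contra h
    push_neg at h
    apply hcon
    refine NormedAddCommGroup.tendsto_nhds_zero.mpr fun ε hε => ?_
    have := h ε hε
    filter_upwards [this] with n hn
    rw [Real.norm_eq_abs, abs_of_nonneg (norm_nonneg _)]
    exact hn
  obtain ⟨ε, hε, hfreq⟩ := hfr
  have hP : ∀ k : ℕ, ∃ᶠ m in atTop, (ε ≤ ‖S (x m)‖ ∧ ‖x m‖ ≤ (1 / 2) ^ k / M) := by
    intro k
    refine hfreq.and_eventually ?_
    have : ∀ᶠ m in atTop, ‖x m‖ < (1 / 2) ^ k / M :=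
      hx.eventually_lt_const (by positivity)
    filter_upwards [this] with m hm using hm.le
  obtain ⟨φ, hφ, hPφ⟩ := Filter.extraction_forall_of_frequently hP
  set z : ℕ → X := fun k => x (φ k) with hz
  choose p q hp0 hq0 hzpq hpn hqn using fun k => hdec (z k)
  have hpb : ∀ k, ‖p k‖ ≤ (1 / 2) ^ k := fun k => by
    calc ‖p k‖ ≤ M * ‖z k‖ := hpn k
      _ ≤ M * ((1 / 2) ^ k / M) := mul_le_mul_of_nonneg_left (hPφ k).2 hM.le
      _ = (1 / 2) ^ k := by field_simp
  have hqb : ∀ k, ‖q k‖ ≤ (1 / 2) ^ k := fun k => by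
    calc ‖q k‖ ≤ M * ‖z k‖ := hqn k
      _ ≤ M * ((1 / 2) ^ k / M) := mul_le_mul_of_nonneg_left (hPφ k).2 hM.le
      _ = (1 / 2) ^ k := by field_simp
  have hgeo : Summable fun n : ℕ => ((1:ℝ) / 2) ^ n :=
    summable_geometric_of_lt_one (by norm_num) (by norm_num)
  have hsp : Summable p := Summable.of_norm_bounded hgeo hpb
  have hsq : Summable q := Summable.of_norm_bounded hgeo hqb
  -- tail sums
  set P : ℕ → X := fun k => ∑' j, p (j + k) with hPdef
  set Q : ℕ → X := fun k => ∑' j, q (j + k) with hQdef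
  have hPsum : ∀ k, Summable fun j => p (j + k) := fun k => (summable_nat_add_iff k).mpr hsp
  have hQsum : ∀ k, Summable fun j => q (j + k) := fun k => (summable_nat_add_iff k).mpr hsq
  have hPsucc : ∀ k, P k = p k + P (k + 1) := by
    intro k
    have h1 := (Summable.sum_add_tsum_nat_add (f := fun j => p (j + k)) 1 (hPsum k)).symm
    simpa [Finset.sum_range_one, add_assoc, add_comm 1 k] using h1
  have hQsucc : ∀ k, Q k = q k + Q (k + 1) := by
    intro k
    have h1 := (Summable.sum_add_tsum_nat_add (f := fun j => q (j + k)) 1 (hQsum k)).symm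
    simpa [Finset.sum_range_one, add_assoc, add_comm 1 k] using h1
  have hP0 : ∀ k, 0 ≤ P k := fun k => aux_tsum_nonneg hclosed fun j => hp0 _
  have hQ0 : ∀ k, 0 ≤ Q k := fun k => aux_tsum_nonneg hclosed fun j => hq0 _
  have hPanti : Antitone P := by
    apply antitone_nat_of_succ_le
    intro k
    rw [hPsucc k]
    calc P (k + 1) = 0 + P (k + 1) := (zero_add _).symm
      _ ≤ p k + P (k + 1) := add_le_add_left (hp0 k) _
  have hQanti : Antitone Q := by
    apply antitone_nat_of_succ_le
    intro k
    rw [hQsucc k]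
    calc Q (k + 1) = 0 + Q (k + 1) := (zero_add _).symm
      _ ≤ q k + Q (k + 1) := add_le_add_left (hq0 k) _
  have hPt : Tendsto P atTop (𝓝 0) := tendsto_sum_nat_add p
  have hQt : Tendsto Q atTop (𝓝 0) := tendsto_sum_nat_add q
  have hGLBP : IsGLB (Set.range P) 0 := by
    constructor
    · rintro _ ⟨k, rfl⟩; exact hP0 k
    · intro w hw
      have hmem : ∀ k, P k - w ∈ {x : X | 0 ≤ x} := fun k => by
        simpa [Set.mem_setOf_eq, sub_nonneg] using hw ⟨k, rfl⟩
      have ht : Tendsto (fun k => P k - w) atTop (𝓝 (0 - w)) := hPt.sub tendsto_const_nhds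
      have h0w := hclosed.mem_of_tendsto ht (Eventually.of_forall hmem)
      simp only [Set.mem_setOf_eq, zero_sub] at h0w
      exact neg_nonneg.mp h0w
  have hGLBQ : IsGLB (Set.range Q) 0 := by
    constructor
    · rintro _ ⟨k, rfl⟩; exact hQ0 k
    · intro w hw
      have hmem : ∀ k, Q k - w ∈ {x : X | 0 ≤ x} := fun k => by
        simpa [Set.mem_setOf_eq, sub_nonneg] using hw ⟨k, rfl⟩
      have ht : Tendsto (fun k => Q k - w) atTop (𝓝 (0 - w)) := hQt.sub tendsto_const_nhds
      have h0w := hclosed.mem_of_tendsto ht (Eventually.of_forall hmem)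
      simp only [Set.mem_setOf_eq, zero_sub] at h0w
      exact neg_nonneg.mp h0w
  have hTP := hS P ⟨hPanti, hGLBP⟩
  have hTQ := hS Q ⟨hQanti, hGLBQ⟩
  have hTP1 : Tendsto (fun k => ‖S (P (k + 1))‖) atTop (𝓝 0) :=
    hTP.comp (tendsto_add_atTop_nat 1)
  have hTQ1 : Tendsto (fun k => ‖S (Q (k + 1))‖) atTop (𝓝 0) :=
    hTQ.comp (tendsto_add_atTop_nat 1)
  have hzt : Tendsto (fun k => ‖S (z k)‖) atTop (𝓝 0) := by
    have hid : ∀ k, S (z k) = (S (P k) - S (P (k + 1))) - (S (Q k) - S (Q (k + 1))) := by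
      intro k
      have hpk : p k = P k - P (k + 1) := by rw [hPsucc k]; abel
      have hqk : q k = Q k - Q (k + 1) := by rw [hQsucc k]; abel
      rw [hzpq k, hpk, hqk, map_sub, map_sub, map_sub]
    refine squeeze_zero (fun k => norm_nonneg _) (fun k => ?_)
      (g := fun k => ‖S (P k)‖ + ‖S (P (k + 1))‖ + (‖S (Q k)‖ + ‖S (Q (k + 1))‖)) ?_
    · rw [hid k]
      calc ‖(S (P k) - S (P (k + 1))) - (S (Q k) - S (Q (k + 1)))‖
          ≤ ‖S (P k) - S (P (k + 1))‖ + ‖S (Q k) - S (Q (k + 1))‖ := norm_sub_le _ _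
        _ ≤ (‖S (P k)‖ + ‖S (P (k + 1))‖) + (‖S (Q k)‖ + ‖S (Q (k + 1))‖) := by
            gcongr <;> exact norm_sub_le _ _
    · have := (hTP.add hTP1).add (hTQ.add hTQ1)
      simpa using this
  obtain ⟨k, hk⟩ := (hzt.eventually_lt_const hε).exists
  exact absurd (hPφ k).1 (not_le.mpr hk)

end Aux

/-- if `X` is an ordered Banach space with a closed generating normal cone
and σ-order continuous norm, and `Y` is a normed space, then a linear operator is
σ-Lebesgue iff it is σ-order-to-norm continuous, and σ-w-Lebesgue iff it is
σ-order-to-weak continuous. -/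
theorem sigmaLebesgue_iff_sigmaOrderToNormContinuous
    {X : Type*} [NormedAddCommGroup X] [NormedSpace ℝ X] [CompleteSpace X] [PartialOrder X]
    [CovariantClass X X (· + ·) (· ≤ ·)] [PosSMulMono ℝ X]
    {Y : Type*} [NormedAddCommGroup Y] [NormedSpace ℝ Y]
    (hclosed : IsClosed {x : X | 0 ≤ x})
    (hgen : ∀ x : X, ∃ a b : X, 0 ≤ a ∧ 0 ≤ b ∧ x = a - b)
    (hnormal : ∃ C : ℝ, 0 < C ∧ ∀ x y : X, 0 ≤ x → x ≤ y → ‖x‖ ≤ C * ‖y‖)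
    (hocn : ∀ x : ℕ → X, OrderConvZero x → Tendsto (fun n => ‖x n‖) atTop (𝓝 0))
    (T : X →ₗ[ℝ] Y) :
    ((∀ x : ℕ → X, DecreasesToZero x → Tendsto (fun n => ‖T (x n)‖) atTop (𝓝 0)) ↔
      (∀ x : ℕ → X, OrderConvZero x → Tendsto (fun n => ‖T (x n)‖) atTop (𝓝 0))) ∧
    ((∀ x : ℕ → X, DecreasesToZero x →
        ∀ f : Y →L[ℝ] ℝ, Tendsto (fun n => f (T (x n))) atTop (𝓝 0)) ↔
      (∀ x : ℕ → X, OrderConvZero x →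
        ∀ f : Y →L[ℝ] ℝ, Tendsto (fun n => f (T (x n))) atTop (𝓝 0))) := by
  constructor
  · constructor
    · intro H x hx
      exact key_lemma hclosed hgen T H (hocn x hx)
    · intro H x hx
      exact H x (decreasesToZero_orderConvZero hx)
  · constructor
    · intro H x hx f
      have hS : ∀ y : ℕ → X, DecreasesToZero y →
          Tendsto (fun n => ‖(f.toLinearMap.comp T) (y n)‖) atTop (𝓝 0) := by
        intro y hy
        have := H y hy f
        exact tendsto_zero_iff_norm_tendsto_zero.mp this
      have := key_lemma hclosed hgen (f.toLinearMap.comp T) hS (hocn x hx)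
      exact tendsto_zero_iff_norm_tendsto_zero.mpr this
    · intro H x hx f
      exact H x (decreasesToZero_orderConvZero hx) f
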